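/- For each n > 2 there exists an (n+2)-dimensional unital F-algebra A with basis 1, e_1, ..., e_{n+1}, multiplication e_1² = e_2, e_1 e_i = e_{i+1} and e_i e_1 = 0 for 2 ≤ i ≤ n−1, e_n² = e_{n+1}, e_{n+1}² = 0, and e_i e_j = 0 for all other pairs i ≠ j with i, j ≥ 2, such that for S = {e_1} one has L_{2n−1}(S) = L_n(S) but L_{2n}(S) ≠ L_n(S). -/

import Mathlib

/-- Words in a finite subset `S` of a (not necessarily associative) unital algebra:
`IsWord S n a` means `a` is a product (with some bracketing) of `n` elements of `S`,
where `1` is the unique word of length `0`. -/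
inductive IsWord {A : Type*} [NonAssocRing A] (S : Set A) : ℕ → A → Prop
  | one : IsWord S 0 1
  | base : ∀ a, a ∈ S → IsWord S 1 a
  | mul : ∀ {m n : ℕ} {a b : A}, 0 < m → 0 < n → IsWord S m a → IsWord S n b →
      IsWord S (m + n) (a * b)

/-- `Lspan F S k` is the `F`-linear span of all words in `S` of length at most `k`. -/
def Lspan (F : Type*) {A : Type*} [Field F] [NonAssocRing A] [Module F A]
    (S : Set A) (k : ℕ) : Submodule F A :=
  Submodule.span F {a | ∃ m ≤ k, IsWord S m a}

/-- `S` generates the algebra `A` iff the union of all the `Lspan F S k` is all of `A`. -/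
def Generates (F : Type*) {A : Type*} [Field F] [NonAssocRing A] [Module F A]
    (S : Set A) : Prop :=
  (⨆ k, Lspan F S k) = ⊤

/-- The length of a generating set: the least `k` with `Lspan F S k = ⊤`. -/
noncomputable def len (F : Type*) {A : Type*} [Field F] [NonAssocRing A] [Module F A]
    (S : Set A) : ℕ :=
  sInf {k | Lspan F S k = ⊤}

/-- The length of the algebra: the maximum of `len F S` over all finite generating sets. -/
noncomputable def algLen (F : Type*) (A : Type*) [Field F] [NonAssocRing A] [Module F A] : ℕ :=
  sSup {l | ∃ S : Set A, S.Finite ∧ Generates F S ∧ len F S = l}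

/-- `w` is a fresh word of length `n` in `S`: a word of length `n` lying in no `Lspan F S m`
for `m < n`. -/
def Fresh (F : Type*) {A : Type*} [Field F] [NonAssocRing A] [Module F A]
    (S : Set A) (n : ℕ) (w : A) : Prop :=
  IsWord S n w ∧ ∀ m < n, w ∉ Lspan F S m

/-- `(m 0, m 1, …, m N)` is the characteristic sequence of `S`: a non-decreasing sequence
with `m 0 = 0` in which each `k ≥ 1` occurs exactly
`dim Lspan F S k − dim Lspan F S (k-1)` times. -/
def IsCharSeq (F : Type*) {A : Type*} [Field F] [NonAssocRing A] [Module F A]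
    (S : Set A) (N : ℕ) (m : ℕ → ℕ) : Prop :=
  m 0 = 0 ∧ (∀ i j, i ≤ j → j ≤ N → m i ≤ m j) ∧
  (∀ t, 1 ≤ t → t ≤ N → 1 ≤ m t) ∧
  ∀ k, 1 ≤ k →
    ((Finset.range (N + 1)).filter (fun t => m t = k)).card
      = Module.finrank F (Lspan F S k) - Module.finrank F (Lspan F S (k - 1))

/-- A bundled (not necessarily associative) unital `F`-algebra. -/
structure AlgWitness (F : Type*) [Field F] where
  carrier : Type
  [ring : NonAssocRing carrier]
  [mod : Module F carrier]
  [scc : SMulCommClass F carrier carrier]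
  [ist : IsScalarTower F carrier carrier]

attribute [instance] AlgWitness.ring AlgWitness.mod AlgWitness.scc AlgWitness.ist


def Acar (F : Type) (n : ℕ) : Type := Fin (n + 2) → F

variable (F : Type) [Field F] (n : ℕ)

def bv (k : ℕ) : Acar F n := fun j => if (j : ℕ) = k then 1 else 0

def cm (i j : Fin (n + 2)) : Acar F n :=
  if (i : ℕ) = 0 then bv F n j
  else if (j : ℕ) = 0 then bv F n i
  else if (i : ℕ) = 1 ∧ (j : ℕ) ≤ n - 1 then bv F n ((j : ℕ) + 1)
  else if (i : ℕ) = n ∧ (j : ℕ) = n then bv F n (n + 1)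
  else fun _ => 0

lemma cm_left0 (j : Fin (n + 2)) : cm F n 0 j = bv F n j := by simp [cm]

lemma cm_right0 (i : Fin (n + 2)) : cm F n i 0 = bv F n i := by
  rcases eq_or_ne ((i : ℕ)) 0 with h | h
  · simp [cm, h]
  · simp [cm, h]

lemma sum_bv (x : Acar F n) (k : Fin (n + 2)) :
    (∑ j : Fin (n + 2), x j * bv F n (j : ℕ) k) = x k := by
  simp [bv, Fin.val_inj, mul_ite]
  rw [Finset.sum_eq_single k]
  · simp
  · intro b _ hb
    simp [Ne.symm hb]
  · simp

def amul (x y : Acar F n) : Acar F n :=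
  fun k => ∑ i : Fin (n + 2), ∑ j : Fin (n + 2), x i * y j * cm F n i j k

instance : NonAssocRing (Acar F n) :=
  letI G : AddCommGroup (Acar F n) := inferInstanceAs (AddCommGroup (Fin (n + 2) → F))
  { G with
    mul := amul F n
    one := bv F n 0
    left_distrib := by
      intro x y z
      funext k
      show (∑ i : Fin (n+2), ∑ j : Fin (n+2), x i * (y j + z j) * cm F n i j k)
        = (∑ i : Fin (n+2), ∑ j : Fin (n+2), x i * y j * cm F n i j k)
          + (∑ i : Fin (n+2), ∑ j : Fin (n+2), x i * z j * cm F n i j k)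
      rw [← Finset.sum_add_distrib]
      refine Finset.sum_congr rfl fun i _ => ?_
      rw [← Finset.sum_add_distrib]
      exact Finset.sum_congr rfl fun j _ => by ring
    right_distrib := by
      intro x y z
      funext k
      show (∑ i : Fin (n+2), ∑ j : Fin (n+2), (x i + y i) * z j * cm F n i j k)
        = (∑ i : Fin (n+2), ∑ j : Fin (n+2), x i * z j * cm F n i j k)
          + (∑ i : Fin (n+2), ∑ j : Fin (n+2), y i * z j * cm F n i j k)
      rw [← Finset.sum_add_distrib]
      refine Finset.sum_congr rfl fun i _ => ?_
      rw [← Finset.sum_add_distrib]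
      exact Finset.sum_congr rfl fun j _ => by ring
    zero_mul := by
      intro x
      funext k
      show (∑ i : Fin (n+2), ∑ j : Fin (n+2), (0:F) * x j * cm F n i j k) = 0
      simp
    mul_zero := by
      intro x
      funext k
      show (∑ i : Fin (n+2), ∑ j : Fin (n+2), x i * (0:F) * cm F n i j k) = 0
      simp
    one_mul := by
      intro x
      funext k
      show (∑ i : Fin (n+2), ∑ j : Fin (n+2), bv F n 0 i * x j * cm F n i j k) = x k
      rw [Finset.sum_eq_single 0]
      · simp only [cm_left0]
        have : bv F n 0 (0 : Fin (n+2)) = 1 := by simp [bv]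
        simp only [this, one_mul]
        exact sum_bv F n x k
      · intro i _ hi
        have : bv F n 0 i = 0 := by
          simp only [bv, if_neg (show ¬((i : ℕ) = 0) from fun h => hi (Fin.ext h))]
        simp [this]
      · simp
    mul_one := by
      intro x
      funext k
      show (∑ i : Fin (n+2), ∑ j : Fin (n+2), x i * bv F n 0 j * cm F n i j k) = x k
      have step : ∀ i : Fin (n+2),
          (∑ j : Fin (n+2), x i * bv F n 0 j * cm F n i j k) = x i * bv F n (i : ℕ) k := by
        intro i
        rw [Finset.sum_eq_single 0]
        · have : bv F n 0 (0 : Fin (n+2)) = 1 := by simp [bv]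
          rw [this, mul_one, cm_right0]
        · intro j _ hj
          have : bv F n 0 j = 0 := by
            simp only [bv, if_neg (show ¬((j : ℕ) = 0) from fun h => hj (Fin.ext h))]
          simp [this]
        · simp
      rw [Finset.sum_congr rfl fun i _ => step i]
      exact sum_bv F n x k }

instance : Module F (Acar F n) := inferInstanceAs (Module F (Fin (n + 2) → F))

lemma smul_apply' (r : F) (x : Acar F n) (k : Fin (n + 2)) : (r • x) k = r * x k := rfl

instance : SMulCommClass F (Acar F n) (Acar F n) := by
  constructor
  intro r x y
  funext k
  show r * (∑ i : Fin (n+2), ∑ j : Fin (n+2), x i * y j * cm F n i j k)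
    = ∑ i : Fin (n+2), ∑ j : Fin (n+2), x i * (r * y j) * cm F n i j k
  rw [Finset.mul_sum]
  refine Finset.sum_congr rfl fun i _ => ?_
  rw [Finset.mul_sum]
  exact Finset.sum_congr rfl fun j _ => by ring

instance : IsScalarTower F (Acar F n) (Acar F n) := by
  constructor
  intro r x y
  funext k
  show (∑ i : Fin (n+2), ∑ j : Fin (n+2), (r * x i) * y j * cm F n i j k)
    = r * (∑ i : Fin (n+2), ∑ j : Fin (n+2), x i * y j * cm F n i j k)
  rw [Finset.mul_sum]
  refine Finset.sum_congr rfl fun i _ => ?_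
  rw [Finset.mul_sum]
  exact Finset.sum_congr rfl fun j _ => by ring

lemma bv_mul_bv (a b : Fin (n + 2)) :
    bv F n (a : ℕ) * bv F n (b : ℕ) = cm F n a b := by
  funext k
  show (∑ i : Fin (n+2), ∑ j : Fin (n+2),
      bv F n (a:ℕ) i * bv F n (b:ℕ) j * cm F n i j k) = cm F n a b k
  rw [Finset.sum_eq_single a]
  · rw [Finset.sum_eq_single b]
    · have h1 : bv F n (a:ℕ) a = 1 := by simp [bv]
      have h2 : bv F n (b:ℕ) b = 1 := by simp [bv]
      rw [h1, h2, one_mul, one_mul]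
    · intro j _ hj
      have : bv F n (b:ℕ) j = 0 := by
        simp only [bv, if_neg (by simpa [Fin.ext_iff] using hj)]
      simp [this]
    · simp
  · intro i _ hi
    have : bv F n (a:ℕ) i = 0 := by
      simp only [bv, if_neg (by simpa [Fin.ext_iff] using hi)]
    simp [this]
  · simp

lemma e_mul_e (a b : ℕ) (ha : a < n + 2) (hb : b < n + 2) :
    bv F n a * bv F n b = cm F n ⟨a, ha⟩ ⟨b, hb⟩ :=
  bv_mul_bv F n ⟨a, ha⟩ ⟨b, hb⟩

lemma one_def : (1 : Acar F n) = bv F n 0 := rfl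

def eqv : (Fin (n + 2) → F) ≃ₗ[F] Acar F n where
  toFun x := x
  invFun x := x
  map_add' _ _ := rfl
  map_smul' _ _ := rfl
  left_inv _ := rfl
  right_inv _ := rfl

noncomputable def Abasis : Module.Basis (Fin (n + 2)) F (Acar F n) :=
  (Pi.basisFun F (Fin (n + 2))).map (eqv F n)

lemma Abasis_eq (i : Fin (n + 2)) : Abasis F n i = bv F n (i : ℕ) := by
  funext k
  have : Abasis F n i = eqv F n (Pi.basisFun F (Fin (n + 2)) i) := by
    simp [Abasis]
  rw [this]
  show (Pi.basisFun F (Fin (n + 2)) i) k = _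
  simp [bv, Pi.basisFun_apply, Pi.single_apply, Fin.val_inj, eq_comm]

lemma bv_linearIndependent : LinearIndependent F (fun i : Fin (n + 2) => bv F n (i : ℕ)) := by
  have := (Abasis F n).linearIndependent
  rwa [funext (Abasis_eq F n)] at this

lemma bv_span : Submodule.span F (Set.range (fun i : Fin (n + 2) => bv F n (i : ℕ))) = ⊤ := by
  have := (Abasis F n).span_eq
  rwa [show Set.range (Abasis F n) = Set.range (fun i : Fin (n + 2) => bv F n (i : ℕ)) from
    by rw [funext (Abasis_eq F n)]] at this

lemma finrank_Acar : Module.finrank F (Acar F n) = n + 2 := by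
  rw [Module.finrank_eq_card_basis (Abasis F n), Fintype.card_fin]

def pr (k : Fin (n + 2)) : Acar F n →ₗ[F] F where
  toFun x := x k
  map_add' _ _ := rfl
  map_smul' _ _ := rfl

-- structure constant case lemmas
lemma cm_zero (p q : Fin (n + 2)) (hp : 1 ≤ (p : ℕ)) (hq : 1 ≤ (q : ℕ))
    (h1 : ¬((p : ℕ) = 1 ∧ (q : ℕ) ≤ n - 1)) (h2 : ¬((p : ℕ) = n ∧ (q : ℕ) = n)) :
    cm F n p q = fun _ => 0 := by
  rw [cm, if_neg (by omega), if_neg (by omega), if_neg h1]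
  exact if_neg h2

lemma cm_one_mul (q : Fin (n + 2)) (hq : 1 ≤ (q : ℕ)) (hq2 : (q : ℕ) ≤ n - 1)
    (p : Fin (n + 2)) (hp : (p : ℕ) = 1) : cm F n p q = bv F n ((q : ℕ) + 1) := by
  rw [cm, if_neg (by omega), if_neg (by omega), if_pos ⟨hp, hq2⟩]

lemma cm_nn (hn : 2 < n) (p q : Fin (n + 2)) (hp : (p : ℕ) = n) (hq : (q : ℕ) = n) :
    cm F n p q = bv F n (n + 1) := by
  rw [cm, if_neg (by omega), if_neg (by omega), if_neg (by omega)]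
  exact if_pos ⟨hp, hq⟩

lemma zero_def : (0 : Acar F n) = fun _ => 0 := rfl

lemma word_class (hn : 2 < n) : ∀ (m : ℕ) (w : Acar F n),
    IsWord {bv F n 1} m w →
    (m ≤ n ∧ w = bv F n m) ∨ (m = 2 * n ∧ w = bv F n (n + 1)) ∨ w = 0 := by
  intro m w h
  induction h with
  | one => exact Or.inl ⟨Nat.zero_le n, rfl⟩
  | base a ha =>
      rw [Set.mem_singleton_iff] at ha
      exact Or.inl ⟨by omega, ha⟩
  | @mul p q a b hp hq ha hb iha ihb =>
      have prod0 : ∀ (s t : ℕ), s < n + 2 → t < n + 2 → 1 ≤ s → 1 ≤ t →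
          ¬(s = 1 ∧ t ≤ n - 1) → ¬(s = n ∧ t = n) → bv F n s * bv F n t = 0 := by
        intro s t hs ht hs1 ht1 h1 h2
        rw [e_mul_e F n s t hs ht, zero_def]
        exact cm_zero F n _ _ hs1 ht1 h1 h2
      rcases iha with ⟨hpa, rfl⟩ | ⟨hpa, rfl⟩ | rfl
      · rcases ihb with ⟨hqb, rfl⟩ | ⟨hqb, rfl⟩ | rfl
        · by_cases h1 : p = 1 ∧ q ≤ n - 1
          · refine Or.inl ⟨by omega, ?_⟩
            rw [show p + q = q + 1 by omega, h1.1, e_mul_e F n 1 q (by omega) (by omega),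
              cm_one_mul F n ⟨q, by omega⟩ hq h1.2 ⟨1, by omega⟩ rfl]
          · by_cases h2 : p = n ∧ q = n
            · refine Or.inr (Or.inl ⟨by omega, ?_⟩)
              rw [h2.1, h2.2, e_mul_e F n n n (by omega) (by omega),
                cm_nn F n hn ⟨n, by omega⟩ ⟨n, by omega⟩ rfl rfl]
            · exact Or.inr (Or.inr (prod0 p q (by omega) (by omega) hp hq h1 h2))
        · exact Or.inr (Or.inr
            (prod0 p (n + 1) (by omega) (by omega) hp (by omega) (by omega) (by omega)))
        · exact Or.inr (Or.inr (mul_zero _))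
      · rcases ihb with ⟨hqb, rfl⟩ | ⟨hqb, rfl⟩ | rfl
        · exact Or.inr (Or.inr
            (prod0 (n + 1) q (by omega) (by omega) (by omega) hq (by omega) (by omega)))
        · exact Or.inr (Or.inr
            (prod0 (n + 1) (n + 1) (by omega) (by omega) (by omega) (by omega)
              (by omega) (by omega)))
        · exact Or.inr (Or.inr (mul_zero _))
      · exact Or.inr (Or.inr (zero_mul _))

lemma word_e (m : ℕ) (hm : m ≤ n) : IsWord {bv F n 1} m (bv F n m) := by
  induction m with
  | zero => exact (one_def F n) ▸ IsWord.one
  | succ m ih =>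
      rcases Nat.eq_zero_or_pos m with rfl | hm0
      · exact IsWord.base _ rfl
      · have hw : bv F n (m + 1) = bv F n 1 * bv F n m := by
          rw [e_mul_e F n 1 m (by omega) (by omega),
            cm_one_mul F n ⟨m, by omega⟩ hm0 (show m ≤ n - 1 by omega) ⟨1, by omega⟩ rfl]
        rw [hw]
        have : (1 : ℕ) + m = m + 1 := by omega
        exact this ▸ IsWord.mul one_pos hm0 (IsWord.base _ rfl) (ih (by omega))

lemma word_top (hn : 2 < n) : IsWord {bv F n 1} (2 * n) (bv F n (n + 1)) := by
  have hw : bv F n (n + 1) = bv F n n * bv F n n := by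
    rw [e_mul_e F n n n (by omega) (by omega), cm_nn F n hn _ _ rfl rfl]
  rw [hw]
  have : n + n = 2 * n := by omega
  exact this ▸ IsWord.mul (by omega) (by omega) (word_e F n n le_rfl) (word_e F n n le_rfl)

lemma lspan_eq (hn : 2 < n) (k : ℕ) (hk1 : n ≤ k) (hk2 : k ≤ 2 * n - 1) :
    Lspan F {bv F n 1} k = Submodule.span F (bv F n '' Set.Iic n) := by
  apply le_antisymm
  · refine Submodule.span_le.2 ?_
    rintro a ⟨m, hm, hw⟩
    rcases word_class F n hn m a hw with ⟨h1, rfl⟩ | ⟨h1, rfl⟩ | rfl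
    · exact Submodule.subset_span ⟨m, h1, rfl⟩
    · omega
    · exact (Submodule.span F _).zero_mem
  · refine Submodule.span_le.2 ?_
    rintro a ⟨m, (hm : m ≤ n), rfl⟩
    exact Submodule.subset_span ⟨m, le_trans hm hk1, word_e F n m hm⟩

lemma bv_not_mem (hn : 2 < n) :
    bv F n (n + 1) ∉ Submodule.span F (bv F n '' Set.Iic n) := by
  intro h
  have hle : Submodule.span F (bv F n '' Set.Iic n) ≤ LinearMap.ker (pr F n ⟨n + 1, by omega⟩) := by
    refine Submodule.span_le.2 ?_
    rintro a ⟨m, (hm : m ≤ n), rfl⟩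
    show bv F n m ∈ LinearMap.ker (pr F n ⟨n + 1, by omega⟩)
    rw [LinearMap.mem_ker]
    show bv F n m ⟨n + 1, by omega⟩ = 0
    show (if (n + 1 : ℕ) = m then (1 : F) else 0) = 0
    rw [if_neg (by omega)]
  have := hle h
  simp only [LinearMap.mem_ker] at this
  have h1 : pr F n ⟨n + 1, by omega⟩ (bv F n (n + 1)) = 1 := by
    show bv F n (n + 1) ⟨n + 1, by omega⟩ = 1
    simp [bv]
  rw [this] at h1
  exact one_ne_zero h1.symm

theorem stmt_4 (F : Type) [Field F] (n : ℕ) (hn : 2 < n) :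
    ∃ (Wit : AlgWitness F) (e : ℕ → Wit.carrier),
      Module.finrank F Wit.carrier = n + 2 ∧
      e 0 = 1 ∧
      LinearIndependent F (fun i : Fin (n + 2) => e i.val) ∧
      Submodule.span F (Set.range (fun i : Fin (n + 2) => e i.val)) = ⊤ ∧
      e 1 * e 1 = e 2 ∧
      (∀ i, 2 ≤ i → i ≤ n - 1 → e 1 * e i = e (i + 1) ∧ e i * e 1 = 0) ∧
      e n * e n = e (n + 1) ∧
      e (n + 1) * e (n + 1) = 0 ∧
      (∀ i j, 2 ≤ i → i ≤ n + 1 → 2 ≤ j → j ≤ n + 1 → i ≠ j → e i * e j = 0) ∧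
      Lspan F {e 1} (2 * n - 1) = Lspan F {e 1} n ∧
      Lspan F {e 1} (2 * n) ≠ Lspan F {e 1} n := by
  refine ⟨{ carrier := Acar F n }, fun k => bv F n k, ?_, ?_, ?_, ?_, ?_, ?_, ?_, ?_, ?_, ?_, ?_⟩
  · exact finrank_Acar F n
  · exact (one_def F n).symm
  · exact bv_linearIndependent F n
  · exact bv_span F n
  · rw [e_mul_e F n 1 1 (by omega) (by omega),
      cm_one_mul F n ⟨1, by omega⟩ (by simp only [Fin.val_mk]; omega) (show (1:ℕ) ≤ n - 1 by omega) ⟨1, by omega⟩ rfl]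
  · intro i h2 hi
    constructor
    · rw [e_mul_e F n 1 i (by omega) (by omega),
        cm_one_mul F n ⟨i, by omega⟩ (by simp only [Fin.val_mk]; omega) (show i ≤ n - 1 from hi) ⟨1, by omega⟩ rfl]
    · rw [e_mul_e F n i 1 (by omega) (by omega),
        cm_zero F n ⟨i, by omega⟩ ⟨1, by omega⟩ (by simp only [Fin.val_mk]; omega) (by simp only [Fin.val_mk]; omega)
          (by simp only [Fin.val_mk]; omega) (by simp only [Fin.val_mk]; omega), ← zero_def]
  · rw [e_mul_e F n n n (by omega) (by omega),
      cm_nn F n hn ⟨n, by omega⟩ ⟨n, by omega⟩ rfl rfl]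
  · rw [e_mul_e F n (n+1) (n+1) (by omega) (by omega),
      cm_zero F n ⟨n+1, by omega⟩ ⟨n+1, by omega⟩ (by simp only [Fin.val_mk]; omega) (by simp only [Fin.val_mk]; omega)
        (by simp only [Fin.val_mk]; omega) (by simp only [Fin.val_mk]; omega), ← zero_def]
  · intro i j h2i hin h2j hjn hij
    rw [e_mul_e F n i j (by omega) (by omega),
      cm_zero F n ⟨i, by omega⟩ ⟨j, by omega⟩ (by simp only [Fin.val_mk]; omega) (by simp only [Fin.val_mk]; omega)
        (by simp only [Fin.val_mk]; omega) (by simp only [Fin.val_mk]; omega), ← zero_def]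
  · exact (lspan_eq F n hn (2 * n - 1) (by omega) le_rfl).trans
      (lspan_eq F n hn n le_rfl (by omega)).symm
  · intro heq
    have h2n : bv F n (n + 1) ∈ Lspan F {bv F n 1} (2 * n) :=
      Submodule.subset_span ⟨2 * n, le_rfl, word_top F n hn⟩
    rw [heq, lspan_eq F n hn n le_rfl (by omega)] at h2n
    exact bv_not_mem F n hn h2n
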